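/- Let m ≥ 1, E = 2m (compact case, no external edges), Q an orthogonal projection on ℂ^E, 𝔖_Q := Q^⊥ − Q, M_sy := {(c,c) : c ∈ ℂ^m}, M_asy := {(c,−c) : c ∈ ℂ^m}. Then tr 𝔖_Q = 2[dim(ker Q ∩ M_sy) − dim((ker Q)^⊥ ∩ M_asy)] = 2[dim(ker Q ∩ M_asy) − dim((ker Q)^⊥ ∩ M_sy)]. -/

import Mathlib

open Matrix

/-- The linear embedding c ↦ (c,c). -/
def symMap (m : ℕ) : (Fin m → ℂ) →ₗ[ℂ] (Fin m ⊕ Fin m → ℂ) where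
  toFun c := Sum.elim c c
  map_add' x y := by funext i; cases i <;> simp
  map_smul' r x := by funext i; cases i <;> simp

/-- The linear embedding c ↦ (c,−c). -/
def asymMap (m : ℕ) : (Fin m → ℂ) →ₗ[ℂ] (Fin m ⊕ Fin m → ℂ) where
  toFun c := Sum.elim c (-c)
  map_add' x y := by funext i; cases i <;> simp [add_comm]
  map_smul' r x := by funext i; cases i <;> simp

/-- The symmetric subspace M_sy = {(c,c)}. -/
noncomputable def Msy (m : ℕ) : Submodule ℂ (Fin m ⊕ Fin m → ℂ) := LinearMap.range (symMap m)

/-- The antisymmetric subspace M_asy = {(c,−c)}. -/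
noncomputable def Masy (m : ℕ) : Submodule ℂ (Fin m ⊕ Fin m → ℂ) := LinearMap.range (asymMap m)

section aux

variable {m : ℕ}

/-- The Euclidean space on which we work. -/
abbrev Esp (m : ℕ) := EuclideanSpace ℂ (Fin m ⊕ Fin m)

/-- The identification of Euclidean space with functions. -/
noncomputable abbrev eE (m : ℕ) : Esp m ≃ₗ[ℂ] (Fin m ⊕ Fin m → ℂ) :=
  WithLp.linearEquiv 2 ℂ (Fin m ⊕ Fin m → ℂ)

/-- A submodule of functions viewed in Euclidean space. -/
noncomputable def toE (N : Submodule ℂ (Fin m ⊕ Fin m → ℂ)) : Submodule ℂ (Esp m) :=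
  N.comap (eE m).toLinearMap

lemma mem_toE (N : Submodule ℂ (Fin m ⊕ Fin m → ℂ)) (x : Esp m) : x ∈ toE N ↔ x.ofLp ∈ N :=
  Iff.rfl

lemma finrank_toE (N : Submodule ℂ (Fin m ⊕ Fin m → ℂ)) :
    Module.finrank ℂ (toE N) = Module.finrank ℂ N := by
  unfold toE
  rw [Submodule.comap_equiv_eq_map_symm]
  exact LinearEquiv.finrank_map_eq _ _

lemma toE_inf (N N' : Submodule ℂ (Fin m ⊕ Fin m → ℂ)) : toE (N ⊓ N') = toE N ⊓ toE N' :=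
  Submodule.comap_inf _ _ _

/-- `Msy` viewed in Euclidean space. -/
noncomputable def MsyE (m : ℕ) : Submodule ℂ (Esp m) := toE (Msy m)

/-- `Masy` viewed in Euclidean space. -/
noncomputable def MasyE (m : ℕ) : Submodule ℂ (Esp m) := toE (Masy m)

lemma aux_inner_mulVec (M : Matrix (Fin m ⊕ Fin m) (Fin m ⊕ Fin m) ℂ) (x y : Esp m) :
    (inner ℂ (WithLp.toLp 2 (M.mulVec x.ofLp) : Esp m) y : ℂ)
      = inner ℂ x (WithLp.toLp 2 (Mᴴ.mulVec y.ofLp) : Esp m) := by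
  simp only [PiLp.inner_apply, RCLike.inner_apply, mulVec, dotProduct, conjTranspose_apply,
    map_sum, _root_.map_mul, Finset.sum_mul, Finset.mul_sum]
  rw [Finset.sum_comm]
  exact Finset.sum_congr rfl fun i _ => Finset.sum_congr rfl fun j _ => by simp only [starRingEnd_apply, star_star]; ring

lemma aux_trace_mulVecLin (M : Matrix (Fin m ⊕ Fin m) (Fin m ⊕ Fin m) ℂ) :
    LinearMap.trace ℂ _ M.mulVecLin = M.trace := by
  rw [LinearMap.trace_eq_matrix_trace ℂ (Pi.basisFun ℂ (Fin m ⊕ Fin m)),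
    LinearMap.toMatrix_eq_toMatrix', ← Matrix.toLin'_apply', LinearMap.toMatrix'_toLin']

lemma finrank_MsyE : Module.finrank ℂ (MsyE m) = m := by
  have : Module.finrank ℂ (MsyE m) = Module.finrank ℂ (Msy m) := finrank_toE _
  rw [this, Msy, LinearMap.finrank_range_of_inj, Module.finrank_fintype_fun_eq_card,
    Fintype.card_fin]
  intro a b hab
  funext i
  exact congrFun hab (Sum.inl i)

lemma finrank_MasyE : Module.finrank ℂ (MasyE m) = m := by
  have : Module.finrank ℂ (MasyE m) = Module.finrank ℂ (Masy m) := finrank_toE _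
  rw [this, Masy, LinearMap.finrank_range_of_inj, Module.finrank_fintype_fun_eq_card,
    Fintype.card_fin]
  intro a b hab
  funext i
  exact congrFun hab (Sum.inl i)

lemma Masy_orth : (MsyE m)ᗮ = MasyE m := by
  have hle : MasyE m ≤ (MsyE m)ᗮ := by
    rintro x ⟨d, hd⟩
    rw [Submodule.mem_orthogonal]
    rintro u ⟨c, hc⟩
    rw [← WithLp.toLp_ofLp (p := 2) x, ← WithLp.toLp_ofLp (p := 2) u]
    change asymMap m d = x.ofLp at hd
    change symMap m c = u.ofLp at hc
    rw [← hd, ← hc]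
    simp only [PiLp.inner_apply, RCLike.inner_apply, symMap, asymMap, LinearMap.coe_mk,
      AddHom.coe_mk, Fintype.sum_sum_type, Sum.elim_inl, Sum.elim_inr, Pi.neg_apply, mul_neg,
      WithLp.ofLp_toLp, PiLp.toLp_apply]
    rw [← Finset.sum_add_distrib]
    simp
  refine (Submodule.eq_of_le_of_finrank_eq hle ?_).symm
  have h1 : Module.finrank ℂ (MsyE m) + Module.finrank ℂ (MsyE m)ᗮ
      = Module.finrank ℂ (Esp m) := Submodule.finrank_add_finrank_orthogonal _
  have h2 : Module.finrank ℂ (Esp m) = m + m := by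
    simp [finrank_euclideanSpace]
  have h3 := finrank_MsyE (m := m)
  have h4 := finrank_MasyE (m := m)
  omega

lemma Msy_orth : (MasyE m)ᗮ = MsyE m := by
  rw [← Masy_orth, Submodule.orthogonal_orthogonal]

end aux

theorem stmt5 {m : ℕ} (hm : 0 < m) (Q : Matrix (Fin m ⊕ Fin m) (Fin m ⊕ Fin m) ℂ)
    (hQ : Qᴴ = Q) (hQ2 : Q * Q = Q) :
    Matrix.trace ((1 : Matrix (Fin m ⊕ Fin m) (Fin m ⊕ Fin m) ℂ) - (2 : ℂ) • Q) =
      2 * ((Module.finrank ℂ ↥(LinearMap.ker Q.mulVecLin ⊓ Msy m) : ℂ) -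
           (Module.finrank ℂ ↥(LinearMap.range Q.mulVecLin ⊓ Masy m) : ℂ)) ∧
    Matrix.trace ((1 : Matrix (Fin m ⊕ Fin m) (Fin m ⊕ Fin m) ℂ) - (2 : ℂ) • Q) =
      2 * ((Module.finrank ℂ ↥(LinearMap.ker Q.mulVecLin ⊓ Masy m) : ℂ) -
           (Module.finrank ℂ ↥(LinearMap.range Q.mulVecLin ⊓ Msy m) : ℂ)) := by
  classical
  -- view the kernel and range as submodules of Euclidean space
  let K : Submodule ℂ (Esp m) := toE (LinearMap.ker Q.mulVecLin)
  let R : Submodule ℂ (Esp m) := toE (LinearMap.range Q.mulVecLin)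
  -- R orthogonal is K
  have hRK : Rᗮ = K := by
    ext x
    rw [Submodule.mem_orthogonal]
    constructor
    · intro h
      have h1 : (inner ℂ (WithLp.toLp 2 (Q.mulVec x.ofLp) : Esp m) x : ℂ) = 0 :=
        h (WithLp.toLp 2 (Q.mulVec x.ofLp) : Esp m) ⟨x.ofLp, rfl⟩
      have h2 : (inner ℂ (WithLp.toLp 2 (Q.mulVec x.ofLp) : Esp m)
          (WithLp.toLp 2 (Q.mulVec x.ofLp) : Esp m) : ℂ) = 0 := by
        rw [aux_inner_mulVec, hQ, WithLp.ofLp_toLp, Matrix.mulVec_mulVec, hQ2, ← inner_conj_symm]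
        have h1' : (inner ℂ x (WithLp.toLp 2 (Q.mulVec x.ofLp) : Esp m) : ℂ) = 0 := by
          rw [← inner_conj_symm, h1, map_zero]
        rw [show (inner ℂ (WithLp.toLp 2 (Q.mulVec x.ofLp) : Esp m) x : ℂ)
            = starRingEnd ℂ (inner ℂ x (WithLp.toLp 2 (Q.mulVec x.ofLp) : Esp m)) from (inner_conj_symm _ _).symm,
          h1', map_zero, map_zero]
      have h3 : (WithLp.toLp 2 (Q.mulVec x.ofLp) : Esp m) = 0 := inner_self_eq_zero.mp h2
      show Q.mulVecLin x.ofLp = 0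
      exact congrArg WithLp.ofLp h3
    · intro hx u hu
      obtain ⟨v, hv⟩ := hu
      change Q.mulVec v = u.ofLp at hv
      rw [← WithLp.toLp_ofLp (p := 2) u, ← hv, aux_inner_mulVec, hQ]
      have hx0 : Q.mulVec x.ofLp = 0 := hx
      rw [hx0, WithLp.toLp_zero, inner_zero_right]
  have hKR : Kᗮ = R := by rw [← hRK, Submodule.orthogonal_orthogonal]
  -- dimension bookkeeping
  have hE : Module.finrank ℂ (Esp m) = m + m := by simp [finrank_euclideanSpace]
  have hkr : Module.finrank ℂ R + Module.finrank ℂ K = m + m := by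
    have hF : Module.finrank ℂ (Fin m ⊕ Fin m → ℂ) = m + m := by simp
    rw [← hF, finrank_toE, finrank_toE]
    exact LinearMap.finrank_range_add_finrank_ker Q.mulVecLin
  have key : ∀ M M' : Submodule ℂ (Esp m), Mᗮ = M' → Module.finrank ℂ M = m →
      (Module.finrank ℂ ↥(K ⊓ M) : ℂ) - (Module.finrank ℂ ↥(R ⊓ M') : ℂ)
        = (Module.finrank ℂ K : ℂ) - m := by
    intro M M' hMM' hMfr
    have h1 : Module.finrank ℂ ↥(K ⊔ M) + Module.finrank ℂ ↥(K ⊓ M)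
        = Module.finrank ℂ K + Module.finrank ℂ M :=
      Submodule.finrank_sup_add_finrank_inf_eq K M
    have h2 : R ⊓ M' = (K ⊔ M)ᗮ := by
      rw [← hKR, ← hMM', Submodule.inf_orthogonal]
    have h3 : Module.finrank ℂ ↥(K ⊔ M) + Module.finrank ℂ ↥(R ⊓ M') = m + m := by
      rw [h2, ← hE]
      exact Submodule.finrank_add_finrank_orthogonal _
    rw [hMfr] at h1
    have h1' : (Module.finrank ℂ ↥(K ⊔ M) : ℂ) + (Module.finrank ℂ ↥(K ⊓ M) : ℂ)
        = (Module.finrank ℂ K : ℂ) + m := by exact_mod_cast congrArg Nat.cast h1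
    have h3' : (Module.finrank ℂ ↥(K ⊔ M) : ℂ) + (Module.finrank ℂ ↥(R ⊓ M') : ℂ)
        = (m : ℂ) + m := by exact_mod_cast congrArg Nat.cast h3
    linear_combination h1' - h3'
  -- trace computation
  have htr : Matrix.trace ((1 : Matrix (Fin m ⊕ Fin m) (Fin m ⊕ Fin m) ℂ) - (2 : ℂ) • Q)
      = ((m : ℂ) + m) - 2 * (Module.finrank ℂ R : ℂ) := by
    have hproj : LinearMap.IsProj (LinearMap.range Q.mulVecLin) Q.mulVecLin := by
      constructor
      · intro x; exact ⟨x, rfl⟩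
      · rintro x ⟨y, rfl⟩
        show Q.mulVec (Q.mulVec y) = Q.mulVec y
        rw [Matrix.mulVec_mulVec, hQ2]
    have h5 : LinearMap.trace ℂ _ Q.mulVecLin
        = (Module.finrank ℂ (LinearMap.range Q.mulVecLin) : ℂ) := hproj.trace
    have hQtr : Q.trace = (Module.finrank ℂ R : ℂ) := by
      rw [← aux_trace_mulVecLin, h5, finrank_toE]
    rw [Matrix.trace_sub, Matrix.trace_smul, Matrix.trace_one, hQtr, smul_eq_mul]
    push_cast [Fintype.card_sum, Fintype.card_fin]
    ring
  have hk : (Module.finrank ℂ K : ℂ) = ((m : ℂ) + m) - (Module.finrank ℂ R : ℂ) := by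
    have := congrArg (Nat.cast : ℕ → ℂ) hkr
    push_cast at this
    linear_combination this
  have key1 := key (MsyE m) (MasyE m) Masy_orth finrank_MsyE
  have key2 := key (MasyE m) (MsyE m) Msy_orth finrank_MasyE
  constructor
  · rw [← finrank_toE (LinearMap.ker Q.mulVecLin ⊓ Msy m), ← finrank_toE (LinearMap.range Q.mulVecLin ⊓ Masy m), toE_inf, toE_inf]
    rw [htr]; erw [key1]; rw [hk]; ring
  · rw [← finrank_toE (LinearMap.ker Q.mulVecLin ⊓ Masy m), ← finrank_toE (LinearMap.range Q.mulVecLin ⊓ Msy m), toE_inf, toE_inf]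
    rw [htr]; erw [key2]; rw [hk]; ring
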